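/- Let P ≥ 0, Q ≥ 0, G > 0 and κ > 0 be real numbers, let m₀ ≥ 1 and s, s', s'' be natural numbers, and for p ∈ ℕ set s_p := 2^p(s+1), s'_p := 2^p s', s''_p := 2^p s'', and W_p := Q^{s''_p/(4κm₀)} · max( P^{1 − s_p/(2m₀)} · G^{s'_p}, G^{2m₀ + s'_p − s_p} ) (all powers being real powers). If 2^p (s + 1) ≤ 2 m₀, then P^{1 − 2^{−p}} · W_p^{2^{−p}} ≤ W₀. -/

import Mathlib

private lemma max_rpow_aux {a b t : ℝ} (ha : 0 ≤ a) (hb : 0 ≤ b) (ht : 0 ≤ t) :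
    (max a b) ^ t = max (a ^ t) (b ^ t) := by
  rcases le_total a b with h | h
  · rw [max_eq_right h, max_eq_right (Real.rpow_le_rpow ha h ht)]
  · rw [max_eq_left h, max_eq_left (Real.rpow_le_rpow hb h ht)]

/-- Auxiliary real-power inequality (Lemma 11 of the paper): with
`s_p = 2^p(s+1)`, `s'_p = 2^p s'`, `s''_p = 2^p s''` and
`W_p = Q^{s''_p/(4κm₀)} · max(P^{1-s_p/(2m₀)} G^{s'_p}, G^{2m₀+s'_p-s_p})`,
if `2^p (s+1) ≤ 2m₀` then `P^{1-2^{-p}} W_p^{2^{-p}} ≤ W₀`. -/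
theorem stmt_9 (P Q G κ : ℝ) (hP : 0 ≤ P) (hQ : 0 ≤ Q) (hG : 0 < G) (hκ : 0 < κ)
    (m₀ : ℕ) (hm₀ : 1 ≤ m₀) (s s' s'' : ℕ) (p : ℕ)
    (hp : 2 ^ p * (s + 1) ≤ 2 * m₀) :
    P ^ (1 - ((2 : ℝ) ^ p)⁻¹) *
      (Q ^ (((2 ^ p * s'' : ℕ) : ℝ) / (4 * κ * m₀)) *
        max (P ^ (1 - ((2 ^ p * (s + 1) : ℕ) : ℝ) / (2 * m₀)) *
              G ^ (((2 ^ p * s' : ℕ) : ℝ)))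
            (G ^ ((2 * m₀ : ℝ) + ((2 ^ p * s' : ℕ) : ℝ) -
              ((2 ^ p * (s + 1) : ℕ) : ℝ)))) ^ (((2 : ℝ) ^ p)⁻¹) ≤
      Q ^ ((s'' : ℝ) / (4 * κ * m₀)) *
        max (P ^ (1 - ((s : ℝ) + 1) / (2 * m₀)) * G ^ ((s' : ℝ)))
            (G ^ ((2 * m₀ : ℝ) + (s' : ℝ) - ((s : ℝ) + 1))) := by
  push_cast
  set T : ℝ := (2:ℝ)^p with hT
  have hT0 : (0:ℝ) < T := by positivity
  set t : ℝ := T⁻¹ with htdef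
  have ht0 : (0:ℝ) < t := by positivity
  have hTt : T * t = 1 := mul_inv_cancel₀ hT0.ne'
  have hT1 : (1:ℝ) ≤ T := one_le_pow₀ one_le_two
  have ht1 : t ≤ 1 := by
    rw [htdef]
    exact inv_le_one_of_one_le₀ hT1
  have hM0 : (0:ℝ) < 2 * (m₀:ℝ) := by
    have : (0:ℝ) < (m₀:ℕ) := by exact_mod_cast hm₀
    positivity
  have hp' : T * ((s:ℝ) + 1) ≤ 2 * (m₀:ℝ) := by
    rw [hT]; exact_mod_cast hp
  set u : ℝ := ((s:ℝ) + 1) / (2 * (m₀:ℝ)) with hudef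
  have hu0 : 0 < u := by positivity
  have hut : u ≤ t := by
    rw [hudef, div_le_iff₀ hM0]
    nlinarith [mul_le_mul_of_nonneg_left hp' ht0.le]
  have hu2 : 2 * (m₀:ℝ) * u = (s:ℝ) + 1 := by
    rw [hudef]; field_simp
  by_cases hP0 : P = 0
  · subst hP0
    rcases Nat.eq_zero_or_pos p with hpz | hpz
    · subst hpz
      norm_num [hT, htdef, hudef]
    · have htlt : t < 1 := by
        rw [htdef]
        exact inv_lt_one_of_one_lt₀ (one_lt_pow₀ one_lt_two (by omega))
      rw [Real.zero_rpow (by linarith : (1:ℝ) - t ≠ 0), zero_mul]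
      positivity
  · have hPpos : 0 < P := lt_of_le_of_ne hP (Ne.symm hP0)
    set c : ℝ := (s'':ℝ) / (4 * κ * (m₀:ℝ)) with hcdef
    set X1 : ℝ := P ^ (1 - u) * G ^ ((s':ℝ)) with hX1
    set X2 : ℝ := G ^ (2 * (m₀:ℝ) + (s':ℝ) - ((s:ℝ) + 1)) with hX2
    set A : ℝ := P ^ (1 - T * ((s:ℝ) + 1) / (2 * (m₀:ℝ))) * G ^ (T * (s':ℝ)) with hAdef
    set B : ℝ := G ^ (2 * (m₀:ℝ) + T * (s':ℝ) - T * ((s:ℝ) + 1)) with hBdef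
    have hA0 : 0 ≤ A := by rw [hAdef]; positivity
    have hB0 : 0 ≤ B := by rw [hBdef]; positivity
    have hQpow : (Q ^ (T * (s'':ℝ) / (4 * κ * (m₀:ℝ)))) ^ t = Q ^ c := by
      rw [← Real.rpow_mul hQ, hcdef]
      congr 1
      have : T * (s'':ℝ) / (4 * κ * (m₀:ℝ)) * t
          = (T * t) * ((s'':ℝ) / (4 * κ * (m₀:ℝ))) := by ring
      rw [this, hTt, one_mul]
    have hApow : A ^ t = P ^ (t - u) * G ^ ((s':ℝ)) := by
      rw [hAdef, Real.mul_rpow (by positivity) (by positivity),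
        ← Real.rpow_mul hP, ← Real.rpow_mul hG.le]
      congr 1
      · congr 1
        rw [show T * ((s:ℝ)+1) / (2*(m₀:ℝ)) = T * u from by rw [hudef]; ring]
        linear_combination (-u) * hTt
      · congr 1
        linear_combination (s':ℝ) * hTt
    have hBpow : B ^ t = G ^ (2 * (m₀:ℝ) * t + (s':ℝ) - ((s:ℝ) + 1)) := by
      rw [hBdef, ← Real.rpow_mul hG.le]
      congr 1
      linear_combination ((s':ℝ) - ((s:ℝ)+1)) * hTt
    have key : P ^ (1 - t) * max (A ^ t) (B ^ t) ≤ max X1 X2 := by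
      rw [mul_max_of_nonneg _ _ (by positivity : (0:ℝ) ≤ P ^ (1 - t))]
      apply max_le
      · rw [hApow, ← mul_assoc, ← Real.rpow_add hPpos]
        have : 1 - t + (t - u) = 1 - u := by ring
        rw [this, ← hX1]
        exact le_max_left _ _
      · rw [hBpow]
        rcases le_total P (G ^ (2 * (m₀:ℝ))) with h | h
        · refine le_trans ?_ (le_max_right X1 X2)
          calc P ^ (1 - t) * G ^ (2 * (m₀:ℝ) * t + (s':ℝ) - ((s:ℝ) + 1))
              ≤ (G ^ (2 * (m₀:ℝ))) ^ (1 - t) *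
                G ^ (2 * (m₀:ℝ) * t + (s':ℝ) - ((s:ℝ) + 1)) :=
                mul_le_mul_of_nonneg_right
                  (Real.rpow_le_rpow hP h (by linarith)) (by positivity)
            _ = X2 := by
                rw [← Real.rpow_mul hG.le, ← Real.rpow_add hG, hX2]
                congr 1
                ring
        · refine le_trans ?_ (le_max_left X1 X2)
          have hsplit : (2 * (m₀:ℝ) * t + (s':ℝ) - ((s:ℝ) + 1))
              = 2 * (m₀:ℝ) * (t - u) + (s':ℝ) := by
            linear_combination hu2
          rw [hsplit, Real.rpow_add hG, Real.rpow_mul hG.le (2 * (m₀:ℝ)) (t - u)]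
          calc P ^ (1 - t) * ((G ^ (2 * (m₀:ℝ))) ^ (t - u) * G ^ ((s':ℝ)))
              ≤ P ^ (1 - t) * (P ^ (t - u) * G ^ ((s':ℝ))) :=
                mul_le_mul_of_nonneg_left
                  (mul_le_mul_of_nonneg_right
                    (Real.rpow_le_rpow (by positivity) h (by linarith)) (by positivity))
                  (by positivity)
            _ = X1 := by
                rw [← mul_assoc, ← Real.rpow_add hPpos, hX1]
                congr 2
                ring
    calc P ^ (1 - t) *
        (Q ^ (T * (s'':ℝ) / (4 * κ * (m₀:ℝ))) * max A B) ^ t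
        = Q ^ c * (P ^ (1 - t) * max (A ^ t) (B ^ t)) := by
          rw [Real.mul_rpow (by positivity) (le_max_of_le_left hA0),
            max_rpow_aux hA0 hB0 ht0.le, hQpow]
          ring
      _ ≤ Q ^ c * max X1 X2 :=
          mul_le_mul_of_nonneg_left key (Real.rpow_nonneg hQ c)
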